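/- For the arcsine density f*(w) = 1/(π√(w(1−w))) on (0,1), the optimal function g_opt reduces to the interleaving attack: g_opt(w) = w for all w ∈ [0,1]. -/

import Mathlib

open Real intervalIntegral MeasureTheory

noncomputable def hfun (v : ℝ) : ℝ := π * (Real.sqrt v * Real.sqrt (1 - v))⁻¹

lemma g_eq_h (v : ℝ) :
    (((π * Real.sqrt (v * (1 - v)))⁻¹) * v * (1 - v))⁻¹ = hfun v := by
  unfold hfun
  rcases le_or_gt v 0 with h0 | h0
  · rcases eq_or_lt_of_le h0 with rfl | h0'
    · simp
    · have h1 : Real.sqrt v = 0 := Real.sqrt_eq_zero'.2 (by linarith)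
      have h2 : Real.sqrt (v * (1 - v)) = 0 :=
        Real.sqrt_eq_zero'.2 (by nlinarith)
      simp [h1, h2]
  · rcases lt_or_ge v 1 with h1 | h1
    · have hv1 : (0:ℝ) < 1 - v := by linarith
      have hs1 : (0:ℝ) < Real.sqrt v := Real.sqrt_pos.2 h0
      have hs2 : (0:ℝ) < Real.sqrt (1 - v) := Real.sqrt_pos.2 hv1
      have hmul : Real.sqrt (v * (1 - v)) = Real.sqrt v * Real.sqrt (1 - v) :=
        Real.sqrt_mul h0.le _
      have hv : Real.sqrt v * Real.sqrt v = v := Real.mul_self_sqrt h0.le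
      have hv' : Real.sqrt (1 - v) * Real.sqrt (1 - v) = 1 - v :=
        Real.mul_self_sqrt hv1.le
      rw [hmul, mul_inv, mul_inv]
      field_simp
      linear_combination (Real.sqrt (1 - v) * Real.sqrt (1 - v)) * hv + v * hv'
    · rcases eq_or_lt_of_le h1 with rfl | h1'
      · simp
      · have hs2 : Real.sqrt (1 - v) = 0 := Real.sqrt_eq_zero'.2 (by linarith)
        have h2 : Real.sqrt (v * (1 - v)) = 0 := Real.sqrt_eq_zero'.2 (by nlinarith)
        simp [hs2, h2]

lemma hfun_meas : Measurable hfun := by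
  unfold hfun
  exact measurable_const.mul
    ((Real.continuous_sqrt.measurable.mul
      (Real.continuous_sqrt.measurable.comp (measurable_const.sub measurable_id))).inv)

lemma rpow_half_inv {v : ℝ} (hv : 0 ≤ v) : v ^ (-(1/2) : ℝ) = (Real.sqrt v)⁻¹ := by
  rw [Real.rpow_neg hv, Real.sqrt_eq_rpow]

lemma hfun_integrable_left : IntervalIntegrable hfun volume 0 (1/2) := by
  have hbase : IntervalIntegrable (fun v : ℝ => (π * Real.sqrt 2) * v ^ (-(1/2) : ℝ))
      volume 0 (1/2) :=
    (intervalIntegral.intervalIntegrable_rpow' (by norm_num)).const_mul _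
  refine hbase.mono_fun hfun_meas.aestronglyMeasurable ?_
  rw [Filter.EventuallyLE, ae_restrict_iff' measurableSet_uIoc]
  refine Filter.Eventually.of_forall fun v hv => ?_
  rw [Set.uIoc_of_le (by norm_num : (0:ℝ) ≤ 1/2)] at hv
  obtain ⟨hv0, hv1⟩ := hv
  have h1v : (1/2 : ℝ) ≤ 1 - v := by linarith
  have hs1 : (0:ℝ) < Real.sqrt v := Real.sqrt_pos.2 hv0
  have hs2 : Real.sqrt (1/2 : ℝ) ≤ Real.sqrt (1 - v) := Real.sqrt_le_sqrt h1v
  have hs2' : (0:ℝ) < Real.sqrt (1/2 : ℝ) := Real.sqrt_pos.2 (by norm_num)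
  have hinv : (Real.sqrt (1/2 : ℝ))⁻¹ = Real.sqrt 2 := by
    rw [show (1/2 : ℝ) = 2⁻¹ by norm_num, Real.sqrt_inv, inv_inv]
  have key : hfun v ≤ (π * Real.sqrt 2) * v ^ (-(1/2) : ℝ) := by
    rw [rpow_half_inv hv0.le]
    unfold hfun
    rw [mul_inv]
    have : (Real.sqrt (1 - v))⁻¹ ≤ Real.sqrt 2 := by
      rw [← hinv]
      exact inv_anti₀ hs2' hs2
    have hπ : (0:ℝ) < π := Real.pi_pos
    calc π * ((Real.sqrt v)⁻¹ * (Real.sqrt (1 - v))⁻¹)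
        ≤ π * ((Real.sqrt v)⁻¹ * Real.sqrt 2) := by
          apply mul_le_mul_of_nonneg_left _ hπ.le
          exact mul_le_mul_of_nonneg_left this (by positivity)
      _ = (π * Real.sqrt 2) * (Real.sqrt v)⁻¹ := by ring
  have hnn : 0 ≤ hfun v := by unfold hfun; positivity
  simp only [Real.norm_eq_abs, abs_of_nonneg hnn]
  calc hfun v ≤ (π * Real.sqrt 2) * v ^ (-(1/2) : ℝ) := key
    _ ≤ |(π * Real.sqrt 2) * v ^ (-(1/2) : ℝ)| := le_abs_self _

lemma hfun_integrable_right : IntervalIntegrable hfun volume (1/2) 1 := by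
  have h := hfun_integrable_left.comp_sub_left 1
  norm_num at h
  refine h.symm.congr (fun x _ => ?_)
  unfold hfun
  rw [sub_sub_cancel, mul_comm (Real.sqrt (1-x)), mul_comm]

lemma hfun_integrable : IntervalIntegrable hfun volume 0 1 :=
  hfun_integrable_left.trans hfun_integrable_right

lemma hasDeriv_F {v : ℝ} (hv : v ∈ Set.Ioo (0:ℝ) 1) :
    HasDerivAt (fun v => 2 * π * Real.arcsin (Real.sqrt v)) (hfun v) v := by
  obtain ⟨h0, h1⟩ := hv
  have hs : (0:ℝ) < Real.sqrt v := Real.sqrt_pos.2 h0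
  have hsq : Real.sqrt v ^ 2 = v := Real.sq_sqrt h0.le
  have hne1 : Real.sqrt v ≠ 1 := by
    intro h
    rw [← hsq, h] at h1
    norm_num at h1
  have hne1' : Real.sqrt v ≠ -1 := by intro h; rw [h] at hs; linarith
  have hd1 : HasDerivAt Real.sqrt (1 / (2 * Real.sqrt v)) v :=
    Real.hasDerivAt_sqrt h0.ne'
  have hd2 : HasDerivAt Real.arcsin (1 / Real.sqrt (1 - Real.sqrt v ^ 2)) (Real.sqrt v) :=
    Real.hasDerivAt_arcsin hne1' hne1
  have hcomp := (hd2.comp v hd1).const_mul (2 * π)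
  refine hcomp.congr_deriv ?_
  unfold hfun
  rw [hsq]
  field_simp

theorem stmt_13 (w : ℝ) (hw : w ∈ Set.Icc (0:ℝ) 1) :
    (1 - Real.cos (π *
        (∫ v in (0:ℝ)..w, (((π * Real.sqrt (v * (1 - v)))⁻¹) * v * (1 - v))⁻¹)
      / (∫ v in (0:ℝ)..(1:ℝ), (((π * Real.sqrt (v * (1 - v)))⁻¹) * v * (1 - v))⁻¹))) / 2
      = w := by
  obtain ⟨hw0, hw1⟩ := hw
  have hGH : ∀ u : ℝ, u ∈ Set.Icc (0:ℝ) 1 →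
      (∫ v in (0:ℝ)..u, (((π * Real.sqrt (v * (1 - v)))⁻¹) * v * (1 - v))⁻¹)
        = 2 * π * Real.arcsin (Real.sqrt u) := by
    intro u hu
    obtain ⟨hu0, hu1⟩ := hu
    have heq : (∫ v in (0:ℝ)..u, (((π * Real.sqrt (v * (1 - v)))⁻¹) * v * (1 - v))⁻¹)
        = ∫ v in (0:ℝ)..u, hfun v := by
      congr 1; funext v; exact g_eq_h v
    rw [heq]
    have hcont : ContinuousOn (fun v => 2 * π * Real.arcsin (Real.sqrt v))
        (Set.Icc 0 u) :=
      (continuous_const.mul (Real.continuous_arcsin.comp Real.continuous_sqrt)).continuousOn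
    have hint : IntervalIntegrable hfun volume 0 u :=
      hfun_integrable.mono_set (by
        rw [Set.uIcc_of_le hu0, Set.uIcc_of_le (by norm_num : (0:ℝ) ≤ 1)]
        exact Set.Icc_subset_Icc le_rfl hu1)
    have := intervalIntegral.integral_eq_sub_of_hasDerivAt_of_le hu0 hcont
      (fun x hx => hasDeriv_F ⟨hx.1, lt_of_lt_of_le hx.2 hu1⟩) hint
    rw [this]
    simp
  rw [hGH w ⟨hw0, hw1⟩, hGH 1 (by norm_num)]
  rw [Real.sqrt_one, Real.arcsin_one]
  have hπ : (0:ℝ) < π := Real.pi_pos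
  have harg : π * (2 * π * Real.arcsin (Real.sqrt w)) / (2 * π * (π / 2))
      = 2 * Real.arcsin (Real.sqrt w) := by
    field_simp
  rw [harg, Real.cos_two_mul, Real.cos_arcsin]
  have h1 : Real.sqrt w ^ 2 = w := Real.sq_sqrt hw0
  have h2 : Real.sqrt (1 - Real.sqrt w ^ 2) ^ 2 = 1 - w := by
    rw [h1]; exact Real.sq_sqrt (by linarith)
  rw [h2]
  ring
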